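/- Let B be a skew left brace, I₁, …, Iₙ minimal ideals of B, and I := I₁+⋯+Iₙ the additive subgroup of (B,+) generated by I₁ ∪ ⋯ ∪ Iₙ. Then I_i*I_i = {0} for all i ∈ {1,…,n} if and only if I*I = {0}. -/

import Mathlib

/-- A *skew left brace* is a set with two group structures `(B,+)` and `(B,∘)`
(the latter written multiplicatively) satisfying `a∘(b+c) = a∘b - a + a∘c`.
The two identity elements automatically coincide. -/
class SkewLeftBrace (B : Type*) extends AddGroup B, Group B where
  mul_add_eq : ∀ a b c : B, a * (b + c) = a * b - a + a * c

namespace SkewLeftBrace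

variable {B : Type*} [SkewLeftBrace B]

/-- The map `λ_a : b ↦ -a + a∘b`. -/
def lmap (a b : B) : B := -a + a * b

/-- The brace star operation `a*b := -a + a∘b - b`. -/
def bstar (a b : B) : B := -a + a * b - b

/-- `X*Y`: the additive subgroup generated by all `bstar x y`, `x ∈ X`, `y ∈ Y`,
regarded as a set. -/
def setStar (X Y : Set B) : Set B :=
  ↑(AddSubgroup.closure {z : B | ∃ x ∈ X, ∃ y ∈ Y, z = bstar x y})

/-- Pointwise sum of two subsets. -/
def setSum (X Y : Set B) : Set B := {w : B | ∃ x ∈ X, ∃ y ∈ Y, w = x + y}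

/-- `X^Z := {z + x - z : x ∈ X, z ∈ Z}`. -/
def setConj (X Z : Set B) : Set B := {w : B | ∃ x ∈ X, ∃ z ∈ Z, w = z + x + -z}

/-- An ideal of a skew left brace: a subgroup of `(B,+)` which is normal in both
`(B,+)` and `(B,∘)` and invariant under all the maps `λ_a`. -/
structure IsIdeal (I : Set B) : Prop where
  zero_mem : (0 : B) ∈ I
  add_mem : ∀ ⦃x y : B⦄, x ∈ I → y ∈ I → x + y ∈ I
  neg_mem : ∀ ⦃x : B⦄, x ∈ I → -x ∈ I
  add_conj_mem : ∀ (b : B) ⦃x : B⦄, x ∈ I → b + x + -b ∈ I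
  mul_mem : ∀ ⦃x y : B⦄, x ∈ I → y ∈ I → x * y ∈ I
  inv_mem : ∀ ⦃x : B⦄, x ∈ I → x⁻¹ ∈ I
  mul_conj_mem : ∀ (b : B) ⦃x : B⦄, x ∈ I → b * x * b⁻¹ ∈ I
  lmap_mem : ∀ (a : B) ⦃x : B⦄, x ∈ I → lmap a x ∈ I

/-- A minimal ideal: a nonzero ideal whose only sub-ideals are `{0}` and itself. -/
def IsMinimalIdeal (I : Set B) : Prop :=
  IsIdeal I ∧ I ≠ {0} ∧ ∀ J : Set B, IsIdeal J → J ⊆ I → J = {0} ∨ J = I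

theorem mul_zero' (a : B) : a * (0 : B) = a := by
  have h := SkewLeftBrace.mul_add_eq a (0 : B) (0 : B)
  rw [add_zero] at h
  have h2 : a * (0:B) - a = 0 := (right_eq_add.mp h)
  exact sub_eq_zero.mp h2

theorem zero_eq_one : (0 : B) = 1 := by
  have h := mul_zero' (1 : B)
  rw [one_mul] at h
  exact h

theorem IsIdeal.one_mem {I : Set B} (h : IsIdeal I) : (1 : B) ∈ I :=
  (zero_eq_one (B := B)) ▸ h.zero_mem

variable (B) in
/-- A skew left brace is *semiprime* if `I*I ≠ {0}` for every nonzero ideal `I`. -/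
def Semiprime : Prop := ∀ I : Set B, IsIdeal I → I ≠ {0} → setStar I I ≠ {0}

variable (B) in
/-- A skew left brace is *prime*... (and) *simple* if its only ideals are `{0}` and `B`,
and these are distinct. -/
def Simple : Prop :=
  ({0} : Set B) ≠ Set.univ ∧ ∀ I : Set B, IsIdeal I → I = {0} ∨ I = Set.univ

variable (B) in
/-- A skew left brace is *Artinian* if every descending chain of ideals stabilizes. -/
def Artinian : Prop :=
  ∀ f : ℕ → Set B, (∀ n, IsIdeal (f n)) → (∀ n, f (n + 1) ⊆ f n) →
    ∃ N, ∀ n, N ≤ n → f n = f N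

/-- The `*`-products of copies of a fixed set `I`. -/
inductive IsStarPowerOf (I : Set B) : Set B → Prop
  | base : IsStarPowerOf I I
  | star {X Y : Set B} : IsStarPowerOf I X → IsStarPowerOf I Y →
      IsStarPowerOf I (setStar X Y)

variable (B) in
/-- A skew left brace is *strongly semiprime* if for every nonzero ideal `I`, every
`*`-product of copies of `I` is nonzero. -/
def StronglySemiprime : Prop :=
  ∀ I : Set B, IsIdeal I → I ≠ {0} → ∀ X : Set B, IsStarPowerOf I X → X ≠ {0}

/-- The `*`-products of nonzero ideals. -/
inductive IsStarProdOfNonzeroIdeals : Set B → Prop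
  | ideal {I : Set B} : IsIdeal I → I ≠ {0} → IsStarProdOfNonzeroIdeals I
  | star {X Y : Set B} : IsStarProdOfNonzeroIdeals X → IsStarProdOfNonzeroIdeals Y →
      IsStarProdOfNonzeroIdeals (setStar X Y)

variable (B) in
/-- A skew left brace is *strongly prime* if every `*`-product of nonzero ideals is nonzero. -/
def StronglyPrime : Prop :=
  ∀ X : Set B, IsStarProdOfNonzeroIdeals X → X ≠ {0}

end SkewLeftBrace
namespace SkewLeftBrace

variable {B : Type*} [SkewLeftBrace B]

/-- An ideal, regarded as a skew left brace with the restricted operations. -/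
def IsIdeal.brace {I : Set B} (h : IsIdeal I) : SkewLeftBrace I :=
  letI : Zero I := ⟨⟨0, h.zero_mem⟩⟩
  letI : Add I := ⟨fun x y => ⟨x.1 + y.1, h.add_mem x.2 y.2⟩⟩
  letI : Neg I := ⟨fun x => ⟨-x.1, h.neg_mem x.2⟩⟩
  letI : One I := ⟨⟨1, h.one_mem⟩⟩
  letI : Mul I := ⟨fun x y => ⟨x.1 * y.1, h.mul_mem x.2 y.2⟩⟩
  letI : Inv I := ⟨fun x => ⟨x.1⁻¹, h.inv_mem x.2⟩⟩
  { add := (· + ·)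
    zero := 0
    neg := (- ·)
    nsmul := nsmulRec
    zsmul := zsmulRec
    add_assoc := fun a b c => Subtype.ext (add_assoc a.1 b.1 c.1)
    zero_add := fun a => Subtype.ext (zero_add a.1)
    add_zero := fun a => Subtype.ext (add_zero a.1)
    neg_add_cancel := fun a => Subtype.ext (neg_add_cancel a.1)
    mul := (· * ·)
    one := 1
    inv := (·⁻¹)
    npow := npowRec
    zpow := zpowRec
    mul_assoc := fun a b c => Subtype.ext (mul_assoc a.1 b.1 c.1)
    one_mul := fun a => Subtype.ext (one_mul a.1)
    mul_one := fun a => Subtype.ext (mul_one a.1)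
    inv_mul_cancel := fun a => Subtype.ext (inv_mul_cancel a.1)
    mul_add_eq := fun a b c =>
      Subtype.ext (by
        show a.1 * (b.1 + c.1) = a.1 * b.1 + -a.1 + a.1 * c.1
        rw [SkewLeftBrace.mul_add_eq, sub_eq_add_neg]) }

/-- The direct product of two skew left braces, with componentwise operations. -/
def prodBrace (B₁ B₂ : Type*) [SkewLeftBrace B₁] [SkewLeftBrace B₂] :
    SkewLeftBrace (B₁ × B₂) :=
  { (inferInstance : AddGroup (B₁ × B₂)), (inferInstance : Group (B₁ × B₂)) with
    mul_add_eq := fun a b c =>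
      Prod.ext (by simp [SkewLeftBrace.mul_add_eq]) (by simp [SkewLeftBrace.mul_add_eq]) }

/-- Two skew left braces are isomorphic if there is a bijection preserving `+` and `∘`. -/
def IsBraceIsomorphic (A C : Type*) [SkewLeftBrace A] [SkewLeftBrace C] : Prop :=
  ∃ f : A ≃ C, (∀ x y : A, f (x + y) = f x + f y) ∧ (∀ x y : A, f (x * y) = f x * f y)

/-- A group homomorphism from `(B₂,∘)` to the automorphism group `Aut(B₁,+,∘)` of the
skew left brace `B₁`, presented as an action `act : B₂ → B₁ → B₁` by skew left brace
automorphisms. -/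
structure BraceActionHom (B₂ B₁ : Type*) [SkewLeftBrace B₂] [SkewLeftBrace B₁] where
  act : B₂ → B₁ → B₁
  act_bijective : ∀ a : B₂, Function.Bijective (act a)
  act_add : ∀ (a : B₂) (x y : B₁), act a (x + y) = act a x + act a y
  act_mul : ∀ (a : B₂) (x y : B₁), act a (x * y) = act a x * act a y
  act_hom : ∀ (a b : B₂) (x : B₁), act (a * b) x = act a (act b x)
  act_one : ∀ x : B₁, act (1 : B₂) x = x

variable {B₁ B₂ : Type*} [SkewLeftBrace B₁] [SkewLeftBrace B₂]

theorem BraceActionHom.act_one' (α : BraceActionHom B₂ B₁) (a : B₂) :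
    α.act a (1 : B₁) = 1 := by
  have h := α.act_mul a 1 1
  rw [mul_one] at h
  exact mul_eq_left.mp h.symm

/-- The underlying type of the semidirect product of two skew left braces. -/
@[ext]
structure SDP (B₁ B₂ : Type*) where
  fst : B₁
  snd : B₂

/-- The semidirect product `B₁ ⋊_α B₂` of skew left braces: the additive group is the
direct product, while `(a₁,a₂) ∘ (b₁,b₂) = (a₁ ∘ α_{a₂}(b₁), a₂ ∘ b₂)`. -/
def BraceActionHom.sdp (α : BraceActionHom B₂ B₁) : SkewLeftBrace (SDP B₁ B₂) :=
  letI : Zero (SDP B₁ B₂) := ⟨⟨0, 0⟩⟩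
  letI : Add (SDP B₁ B₂) := ⟨fun p q => ⟨p.fst + q.fst, p.snd + q.snd⟩⟩
  letI : Neg (SDP B₁ B₂) := ⟨fun p => ⟨-p.fst, -p.snd⟩⟩
  letI : One (SDP B₁ B₂) := ⟨⟨1, 1⟩⟩
  letI : Mul (SDP B₁ B₂) := ⟨fun p q => ⟨p.fst * α.act p.snd q.fst, p.snd * q.snd⟩⟩
  letI : Inv (SDP B₁ B₂) := ⟨fun p => ⟨α.act p.snd⁻¹ p.fst⁻¹, p.snd⁻¹⟩⟩
  { add := (· + ·)
    zero := 0
    neg := (- ·)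
    nsmul := nsmulRec
    zsmul := zsmulRec
    add_assoc := fun a b c =>
      SDP.ext (add_assoc a.fst b.fst c.fst) (add_assoc a.snd b.snd c.snd)
    zero_add := fun a => SDP.ext (zero_add a.fst) (zero_add a.snd)
    add_zero := fun a => SDP.ext (add_zero a.fst) (add_zero a.snd)
    neg_add_cancel := fun a => SDP.ext (neg_add_cancel a.fst) (neg_add_cancel a.snd)
    mul := (· * ·)
    one := 1
    inv := (·⁻¹)
    npow := npowRec
    zpow := zpowRec
    mul_assoc := fun a b c =>
      SDP.ext
        (by show (a.fst * α.act a.snd b.fst) * α.act (a.snd * b.snd) c.fst =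
              a.fst * α.act a.snd (b.fst * α.act b.snd c.fst)
            rw [α.act_hom, α.act_mul, mul_assoc])
        (mul_assoc a.snd b.snd c.snd)
    one_mul := fun a =>
      SDP.ext (by show (1 : B₁) * α.act 1 a.fst = a.fst; rw [α.act_one, one_mul])
        (one_mul a.snd)
    mul_one := fun a =>
      SDP.ext (by show a.fst * α.act a.snd (1 : B₁) = a.fst; rw [α.act_one', mul_one])
        (mul_one a.snd)
    inv_mul_cancel := fun a =>
      SDP.ext
        (by show α.act a.snd⁻¹ a.fst⁻¹ * α.act a.snd⁻¹ a.fst = 1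
            rw [← α.act_mul, inv_mul_cancel, α.act_one'])
        (inv_mul_cancel a.snd)
    mul_add_eq := fun a b c =>
      SDP.ext
        (by show a.fst * α.act a.snd (b.fst + c.fst) =
              a.fst * α.act a.snd b.fst + -a.fst + a.fst * α.act a.snd c.fst
            rw [α.act_add, SkewLeftBrace.mul_add_eq, sub_eq_add_neg])
        (by show a.snd * (b.snd + c.snd) = a.snd * b.snd + -a.snd + a.snd * c.snd
            rw [SkewLeftBrace.mul_add_eq, sub_eq_add_neg]) }

end SkewLeftBrace

open SkewLeftBrace
namespace SkewLeftBrace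

variable {B : Type*} [SkewLeftBrace B]

theorem lmap_add' (a b c : B) : lmap a (b + c) = lmap a b + lmap a c := by
  unfold lmap
  rw [SkewLeftBrace.mul_add_eq]
  simp [sub_eq_add_neg, add_assoc]

theorem lmap_zero' (a : B) : lmap a (0 : B) = 0 := by
  unfold lmap; rw [mul_zero', neg_add_cancel]

theorem lmap_neg' (a b : B) : lmap a (-b) = - lmap a b := by
  have h := lmap_add' a b (-b)
  rw [add_neg_cancel, lmap_zero'] at h
  exact (neg_eq_of_add_eq_zero_right h.symm).symm

theorem mul_eq_add_lmap (a b : B) : a * b = a + lmap a b := by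
  unfold lmap; rw [add_neg_cancel_left]

theorem mul_neg' (a b : B) : a * (-b) = a + -(a * b) + a := by
  have h := SkewLeftBrace.mul_add_eq a (-b) b
  rw [neg_add_cancel, mul_zero', sub_eq_add_neg] at h
  -- h : a * -b + -a + a * b = a
  have h1 := congrArg (· + -(a * b)) h
  simp only [add_neg_cancel_right] at h1
  -- h1 : a * -b + -a = a + -(a * b)
  have h2 := congrArg (· + a) h1
  simp only [neg_add_cancel_right] at h2
  exact h2.symm

theorem lmap_mul' (a b c : B) : lmap (a * b) c = lmap a (lmap b c) := by
  unfold lmap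
  rw [SkewLeftBrace.mul_add_eq a (-b) (b*c), mul_neg', mul_assoc]
  simp [sub_eq_add_neg, add_assoc]

theorem lmap_one' (b : B) : lmap (1 : B) b = b := by
  unfold lmap; rw [one_mul, ← zero_eq_one, neg_zero, zero_add]

theorem bstar_eq_lmap (a b : B) : bstar a b = lmap a b - b := rfl

theorem IsIdeal.inter {I J : Set B} (hI : IsIdeal I) (hJ : IsIdeal J) :
    IsIdeal (I ∩ J) where
  zero_mem := ⟨hI.zero_mem, hJ.zero_mem⟩
  add_mem := fun _ _ hx hy => ⟨hI.add_mem hx.1 hy.1, hJ.add_mem hx.2 hy.2⟩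
  neg_mem := fun _ hx => ⟨hI.neg_mem hx.1, hJ.neg_mem hx.2⟩
  add_conj_mem := fun b _ hx => ⟨hI.add_conj_mem b hx.1, hJ.add_conj_mem b hx.2⟩
  mul_mem := fun _ _ hx hy => ⟨hI.mul_mem hx.1 hy.1, hJ.mul_mem hx.2 hy.2⟩
  inv_mem := fun _ hx => ⟨hI.inv_mem hx.1, hJ.inv_mem hx.2⟩
  mul_conj_mem := fun b _ hx => ⟨hI.mul_conj_mem b hx.1, hJ.mul_conj_mem b hx.2⟩
  lmap_mem := fun a _ hx => ⟨hI.lmap_mem a hx.1, hJ.lmap_mem a hx.2⟩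

/-- For ideals `I`, `J`, and `x ∈ I`, `y ∈ J`, we have `bstar x y ∈ I ∩ J`. -/
theorem bstar_mem_inter {I J : Set B} (hI : IsIdeal I) (hJ : IsIdeal J)
    {x y : B} (hx : x ∈ I) (hy : y ∈ J) : bstar x y ∈ I ∩ J := by
  constructor
  · have hw : y⁻¹ * x * (y⁻¹)⁻¹ ∈ I := hI.mul_conj_mem y⁻¹ hx
    rw [inv_inv] at hw
    have hlw : lmap y (y⁻¹ * x * y) ∈ I := hI.lmap_mem y hw
    have hc : y + lmap y (y⁻¹ * x * y) + -y ∈ I := hI.add_conj_mem y hlw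
    have key : bstar x y = -x + (y + lmap y (y⁻¹ * x * y) + -y) := by
      unfold bstar
      have hxy : x * y = y * (y⁻¹ * x * y) := by group
      rw [hxy, mul_eq_add_lmap y]
      simp [sub_eq_add_neg, add_assoc]
    rw [key]
    exact hI.add_mem (hI.neg_mem hx) hc
  · rw [bstar_eq_lmap, sub_eq_add_neg]
    exact hJ.add_mem (hJ.lmap_mem x hy) (hJ.neg_mem hy)

theorem setStar_eq_zero_iff {X Y : Set B} :
    setStar X Y = {0} ↔ ∀ x ∈ X, ∀ y ∈ Y, bstar x y = 0 := by
  constructor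
  · intro h x hx y hy
    have : bstar x y ∈ setStar X Y :=
      AddSubgroup.subset_closure ⟨x, hx, y, hy, rfl⟩
    rw [h] at this
    exact this
  · intro h
    unfold setStar
    have hsub : {z : B | ∃ x ∈ X, ∃ y ∈ Y, z = bstar x y} ⊆ {0} := by
      rintro z ⟨x, hx, y, hy, rfl⟩
      exact h x hx y hy
    have hle : AddSubgroup.closure {z : B | ∃ x ∈ X, ∃ y ∈ Y, z = bstar x y} ≤ ⊥ := by
      rw [← AddSubgroup.closure_singleton_zero]
      exact AddSubgroup.closure_mono hsub
    have hbot : AddSubgroup.closure {z : B | ∃ x ∈ X, ∃ y ∈ Y, z = bstar x y} = ⊥ :=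
      le_antisymm hle bot_le
    rw [hbot]; rfl

end SkewLeftBrace
open SkewLeftBrace in
theorem SkewLeftBrace.bstar_eq_zero_iff_lmap {B : Type*} [SkewLeftBrace B] (x y : B) :
    bstar x y = 0 ↔ lmap x y = y := by
  rw [bstar_eq_lmap, sub_eq_zero]

/-- For minimal ideals `I₁, …, Iₙ` with sum `I = I₁+⋯+Iₙ`, one has `I_i*I_i = {0}`
for all `i` if and only if `I*I = {0}`. -/
theorem sum_star_trivial_iff {B : Type*} [SkewLeftBrace B]
    (n : ℕ) (I : Fin n → Set B) (hI : ∀ k, IsMinimalIdeal (I k)) :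
    (∀ k, setStar (I k) (I k) = {0}) ↔
      setStar (↑(AddSubgroup.closure (⋃ k, I k)) : Set B)
        (↑(AddSubgroup.closure (⋃ k, I k)) : Set B) = {0} := by
  set C := AddSubgroup.closure (⋃ k, I k) with hCdef
  constructor
  · intro h
    -- Step B: star products of generators vanish
    have hgen : ∀ i j, ∀ x ∈ I i, ∀ y ∈ I j, bstar x y = 0 := by
      intro i j x hx y hy
      by_cases heq : I i = I j
      · exact setStar_eq_zero_iff.mp (h j) x (heq ▸ hx) y hy
      · have hmem := bstar_mem_inter (hI i).1 (hI j).1 hx hy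
        have hideal := (hI i).1.inter (hI j).1
        rcases (hI i).2.2 _ hideal Set.inter_subset_left with h0 | hi
        · rw [h0] at hmem; exact hmem
        · rcases (hI j).2.2 _ hideal Set.inter_subset_right with h0 | hj
          · rw [h0] at hmem; exact hmem
          · exact (heq (hi.symm.trans hj)).elim
    -- Step C: generators act trivially on all of C
    have hgenl : ∀ i, ∀ x ∈ I i, ∀ y ∈ C, lmap x y = y := by
      intro i x hx y hy
      induction hy using AddSubgroup.closure_induction with
      | mem y hyu =>
          rcases Set.mem_iUnion.mp hyu with ⟨j, hyj⟩
          exact (bstar_eq_zero_iff_lmap x y).mp (hgen i j x hx y hyj)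
      | zero => exact lmap_zero' x
      | add y z _ _ py pz => rw [lmap_add', py, pz]
      | neg y _ py => rw [lmap_neg', py]
    -- Step D: every element of C acts trivially on C
    have key : ∀ x ∈ C, ∀ y ∈ C, lmap x y = y := by
      intro x hx
      induction hx using AddSubgroup.closure_induction with
      | mem x hxu =>
          intro y hy
          rcases Set.mem_iUnion.mp hxu with ⟨i, hxi⟩
          exact hgenl i x hxi y hy
      | zero =>
          intro y hy
          rw [zero_eq_one, lmap_one']
      | add x z hx hz px pz =>
          intro y hy
          have hxz : x + z = x * z := by rw [mul_eq_add_lmap, px z hz]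
          rw [hxz, lmap_mul', pz y hy, px y hy]
      | neg x hx px =>
          intro y hy
          have hinv : ∀ w ∈ C, lmap x⁻¹ w = w := by
            intro w hw
            have h1 : lmap x⁻¹ (lmap x w) = w := by
              rw [← lmap_mul', inv_mul_cancel, lmap_one']
            rw [px w hw] at h1; exact h1
          have hneg : -x = x⁻¹ := by
            have h1 : x⁻¹ + lmap x⁻¹ x = 0 := by
              rw [← mul_eq_add_lmap, inv_mul_cancel, ← zero_eq_one]
            rw [hinv x hx] at h1
            exact neg_eq_of_add_eq_zero_left h1
          rw [hneg]
          exact hinv y hy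
    rw [setStar_eq_zero_iff]
    intro x hx y hy
    rw [bstar_eq_lmap, key x hx y hy, sub_self]
  · intro h k
    rw [setStar_eq_zero_iff] at h ⊢
    intro x hx y hy
    exact h x (AddSubgroup.subset_closure (Set.mem_iUnion.mpr ⟨k, hx⟩))
      y (AddSubgroup.subset_closure (Set.mem_iUnion.mpr ⟨k, hy⟩))
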